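/- If f = u + iv is a holomorphic function on the unit disk 𝔻 with values in the vertical strip (0,1) × ℝ (i.e. 0 < Re f(z) < 1 for all z ∈ 𝔻) and Im f(0) = 0, then ‖f‖₁ = sup_{0<r<1} (1/2π)∫₀^{2π} |f(re^{it})| dt < 1. -/

import Mathlib

open Complex Metric MeasureTheory

/-- The integral mean `M₁(r, f) = (1/2π) ∫₀^{2π} |f(re^{it})| dt`. -/
noncomputable def circleMean (f : ℂ → ℂ) (r : ℝ) : ℝ :=
  (1 / (2 * Real.pi)) * ∫ t in (0:ℝ)..(2 * Real.pi), ‖f (r * Complex.exp (t * Complex.I))‖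

lemma aux_mem_ball {r : ℝ} (hr1 : r < 1) (hr0 : 0 ≤ r) (t : ℝ) :
    (r : ℂ) * Complex.exp (t * Complex.I) ∈ ball (0:ℂ) 1 := by
  have hnorm : ‖(r : ℂ) * Complex.exp (t * Complex.I)‖ = r := by
    rw [norm_mul, Complex.norm_real, Real.norm_eq_abs,
      Complex.norm_exp_ofReal_mul_I, mul_one, _root_.abs_of_nonneg hr0]
  rw [mem_ball, dist_zero_right, hnorm]
  exact hr1

/-- Mean value property from the Cauchy integral formula. -/
lemma aux_mean_value (g : ℂ → ℂ) (hg : DifferentiableOn ℂ g (ball (0:ℂ) 1))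
    {r : ℝ} (hr0 : 0 < r) (hr1 : r < 1) :
    ∫ t in (0:ℝ)..(2 * Real.pi), g ((r : ℂ) * Complex.exp (t * Complex.I))
      = (2 * Real.pi) * g 0 := by
  have hd : DiffContOnCl ℂ g (ball (0:ℂ) r) := by
    refine ⟨hg.mono (ball_subset_ball hr1.le), ?_⟩
    rw [closure_ball (0:ℂ) hr0.ne']
    exact hg.continuousOn.mono (closedBall_subset_ball hr1)
  have h := hd.circleIntegral_sub_inv_smul (mem_ball_self hr0)
  rw [circleIntegral] at h
  have hne : ∀ t : ℝ, circleMap 0 r t ≠ 0 := fun t => circleMap_ne_center hr0.ne'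
  have heq : ∀ t : ℝ, deriv (circleMap 0 r) t • (circleMap 0 r t - 0)⁻¹ • g (circleMap 0 r t)
      = Complex.I * g (circleMap 0 r t) := by
    intro t
    rw [deriv_circleMap]
    simp only [sub_zero, smul_eq_mul]
    field_simp [hne t]
  simp only [heq] at h
  rw [intervalIntegral.integral_const_mul] at h
  have hI : (Complex.I : ℂ) ≠ 0 := Complex.I_ne_zero
  have : Complex.I * ∫ t in (0:ℝ)..(2 * Real.pi), g (circleMap 0 r t)
      = Complex.I * ((2 * Real.pi) * g 0) := by
    rw [h]; simp only [smul_eq_mul]; ring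
  have h2 := mul_left_cancel₀ hI this
  have hcm : ∀ t : ℝ, circleMap 0 r t = (r : ℂ) * Complex.exp (t * Complex.I) := by
    intro t; simp [circleMap]
  simpa only [hcm] using h2

/-- **Holomorphic maps into the strip `(0,1) × ℝ` have `H¹` norm less than `1`.**
If `f` is holomorphic on the unit disk with `0 < Re f < 1` and `Im f(0) = 0`, then
`‖f‖₁ = sup_{0<r<1} (1/2π)∫₀^{2π} |f(re^{it})| dt < 1`. -/
theorem hardy_norm_lt_one_of_maps_to_strip (f : ℂ → ℂ)
    (hf : DifferentiableOn ℂ f (ball (0:ℂ) 1))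
    (hstrip : ∀ z ∈ ball (0:ℂ) 1, 0 < (f z).re ∧ (f z).re < 1)
    (h0 : (f 0).im = 0) :
    BddAbove (Set.range fun r : Set.Ioo (0:ℝ) 1 => circleMean f r) ∧
      (⨆ r : Set.Ioo (0:ℝ) 1, circleMean f r) < 1 := by
  have h01 : (0:ℂ) ∈ ball (0:ℂ) 1 := by simp
  set u₀ : ℝ := (f 0).re with hu₀
  have hu₀0 : 0 < u₀ := (hstrip 0 h01).1
  have hu₀1 : u₀ < 1 := (hstrip 0 h01).2
  set B : ℝ := 1 - (1 - u₀)^2 / 2 with hB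
  have hB1 : B < 1 := by
    have h1 : 0 < 1 - u₀ := by linarith
    have : 0 < (1 - u₀)^2 := pow_pos h1 2
    simp only [hB]; linarith
  -- key bound for each r
  have key : ∀ r : ℝ, 0 < r → r < 1 → circleMean f r ≤ B := by
    intro r hr0 hr1
    have hmem := aux_mem_ball hr1 hr0.le
    have hcont : Continuous fun t : ℝ => f ((r : ℂ) * Complex.exp (t * Complex.I)) := by
      apply hf.continuousOn.comp_continuous
      · exact continuous_const.mul (Complex.continuous_exp.comp
          (continuous_ofReal.mul continuous_const))
      · exact hmem
    set F : ℝ → ℂ := fun t => f ((r : ℂ) * Complex.exp (t * Complex.I)) with hF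
    -- integrability
    have hiF : IntervalIntegrable F volume 0 (2 * Real.pi) := hcont.intervalIntegrable _ _
    have hiabs : IntervalIntegrable (fun t => ‖F t‖) volume 0 (2 * Real.pi) :=
      (continuous_norm.comp hcont).intervalIntegrable _ _
    have hiabs2 : IntervalIntegrable (fun t => (‖F t‖)^2) volume 0 (2 * Real.pi) :=
      ((continuous_norm.comp hcont).pow 2).intervalIntegrable _ _
    have hire : IntervalIntegrable (fun t => (F t).re) volume 0 (2 * Real.pi) :=
      (Complex.continuous_re.comp hcont).intervalIntegrable _ _
    have hire2 : IntervalIntegrable (fun t => (F t).re ^ 2) volume 0 (2 * Real.pi) :=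
      ((Complex.continuous_re.comp hcont).pow 2).intervalIntegrable _ _
    -- mean value for f
    have hmv : ∫ t in (0:ℝ)..(2 * Real.pi), F t = (2 * Real.pi) * f 0 :=
      aux_mean_value f hf hr0 hr1
    have hmvre : ∫ t in (0:ℝ)..(2 * Real.pi), (F t).re = (2 * Real.pi) * u₀ := by
      have := Complex.reCLM.intervalIntegral_comp_comm hiF
      simp only [Complex.reCLM_apply] at this
      rw [this, hmv]
      simp [hu₀]
    -- mean value for f²
    have hf2 : DifferentiableOn ℂ (fun z => (f z)^2) (ball (0:ℂ) 1) := hf.pow 2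
    have hmv2 : ∫ t in (0:ℝ)..(2 * Real.pi), (F t)^2 = (2 * Real.pi) * (f 0)^2 :=
      aux_mean_value (fun z => (f z)^2) hf2 hr0 hr1
    have hiF2 : IntervalIntegrable (fun t => (F t)^2) volume 0 (2 * Real.pi) :=
      (hcont.pow 2).intervalIntegrable _ _
    have hmv2re : ∫ t in (0:ℝ)..(2 * Real.pi), ((F t)^2).re = (2 * Real.pi) * u₀^2 := by
      have hCLM := Complex.reCLM.intervalIntegral_comp_comm hiF2
      simp only [Complex.reCLM_apply] at hCLM
      rw [hCLM, hmv2]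
      have hre : ((f 0)^2).re = u₀^2 := by
        rw [pow_two, Complex.mul_re, h0, hu₀]; ring
      simp only [Complex.mul_re, Complex.mul_im, Complex.ofReal_re, Complex.ofReal_im,
        Complex.re_ofNat, Complex.im_ofNat, hre]
      have him : ((f 0)^2).im = 0 := by
        rw [pow_two, Complex.mul_im, h0]; ring
      rw [him]; ring
    -- pointwise: |F t|² = 2 (Re F t)² - Re (F t ²)
    have hsq : ∀ t : ℝ, (‖F t‖)^2 = 2 * (F t).re ^ 2 - ((F t)^2).re := by
      intro t
      have h2 : (F t ^ 2).re = (F t).re^2 - (F t).im^2 := by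
        rw [pow_two, Complex.mul_re]; ring
      rw [Complex.sq_norm, Complex.normSq_apply, h2]; ring
    have hint_sq : ∫ t in (0:ℝ)..(2 * Real.pi), (‖F t‖)^2
        = 2 * (∫ t in (0:ℝ)..(2 * Real.pi), (F t).re ^ 2) - (2 * Real.pi) * u₀^2 := by
      rw [← hmv2re]
      have hire2' := hire2
      have hiFre2 : IntervalIntegrable (fun t => ((F t)^2).re) volume 0 (2 * Real.pi) :=
        (Complex.continuous_re.comp (hcont.pow 2)).intervalIntegrable _ _
      calc ∫ t in (0:ℝ)..(2 * Real.pi), (‖F t‖)^2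
          = ∫ t in (0:ℝ)..(2 * Real.pi), (2 * (F t).re ^ 2 - ((F t)^2).re) := by
            apply intervalIntegral.integral_congr; intro t _; exact hsq t
        _ = 2 * (∫ t in (0:ℝ)..(2 * Real.pi), (F t).re ^ 2)
              - ∫ t in (0:ℝ)..(2 * Real.pi), ((F t)^2).re := by
            rw [intervalIntegral.integral_sub (hire2'.const_mul 2) hiFre2,
              intervalIntegral.integral_const_mul]
    -- (Re F)² ≤ Re F pointwise on circle
    have hre_bd : ∀ t : ℝ, (F t).re ^ 2 ≤ (F t).re := by
      intro t
      have h1 := (hstrip _ (hmem t)).1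
      have h2 := (hstrip _ (hmem t)).2
      nlinarith
    have hint_re2 : ∫ t in (0:ℝ)..(2 * Real.pi), (F t).re ^ 2
        ≤ (2 * Real.pi) * u₀ := by
      rw [← hmvre]
      apply intervalIntegral.integral_mono_on Real.two_pi_pos.le hire2 hire
      intro t _; exact hre_bd t
    -- |F| ≤ (1 + |F|²)/2
    have habs_bd : ∀ t : ℝ, ‖F t‖ ≤ (1 + (‖F t‖)^2) / 2 := by
      intro t
      nlinarith [sq_nonneg (‖F t‖ - 1)]
    have hint_abs : ∫ t in (0:ℝ)..(2 * Real.pi), ‖F t‖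
        ≤ (2 * Real.pi) * B := by
      have step1 : ∫ t in (0:ℝ)..(2 * Real.pi), ‖F t‖
          ≤ ∫ t in (0:ℝ)..(2 * Real.pi), (1 + (‖F t‖)^2) / 2 := by
        apply intervalIntegral.integral_mono_on Real.two_pi_pos.le hiabs
          ((intervalIntegrable_const.add hiabs2).div_const 2)
        intro t _; exact habs_bd t
      have step2 : ∫ t in (0:ℝ)..(2 * Real.pi), (1 + (‖F t‖)^2) / 2
          = Real.pi + (∫ t in (0:ℝ)..(2 * Real.pi), (‖F t‖)^2) / 2 := by
        rw [show (fun t => (1 + (‖F t‖)^2) / 2)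
            = (fun t => (1:ℝ)/2 + (‖F t‖)^2 * (1/2)) from by funext t; ring]
        rw [intervalIntegral.integral_add (intervalIntegrable_const) (hiabs2.mul_const _),
          intervalIntegral.integral_const, intervalIntegral.integral_mul_const]
        simp; ring
      have step3 : (∫ t in (0:ℝ)..(2 * Real.pi), (‖F t‖)^2)
          ≤ (2 * Real.pi) * (2 * u₀ - u₀^2) := by
        rw [hint_sq]; nlinarith
      calc ∫ t in (0:ℝ)..(2 * Real.pi), ‖F t‖
          ≤ Real.pi + (∫ t in (0:ℝ)..(2 * Real.pi), (‖F t‖)^2) / 2 := by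
            rw [← step2]; exact step1
        _ ≤ Real.pi + ((2 * Real.pi) * (2 * u₀ - u₀^2)) / 2 := by linarith
        _ = (2 * Real.pi) * B := by rw [hB]; ring
    -- conclude
    have h2pi : (0:ℝ) < 2 * Real.pi := Real.two_pi_pos
    rw [circleMean]
    calc (1 / (2 * Real.pi)) * ∫ t in (0:ℝ)..(2 * Real.pi), ‖F t‖
        ≤ (1 / (2 * Real.pi)) * ((2 * Real.pi) * B) := by
          apply mul_le_mul_of_nonneg_left hint_abs
          positivity
      _ = B := by field_simp
  -- wrap up
  have hbdd : BddAbove (Set.range fun r : Set.Ioo (0:ℝ) 1 => circleMean f r) := by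
    refine ⟨B, ?_⟩
    rintro x ⟨r, rfl⟩
    exact key r r.2.1 r.2.2
  refine ⟨hbdd, ?_⟩
  have hne : Nonempty (Set.Ioo (0:ℝ) 1) := ⟨⟨1/2, by norm_num⟩⟩
  have : (⨆ r : Set.Ioo (0:ℝ) 1, circleMean f r) ≤ B :=
    ciSup_le fun r => key r r.2.1 r.2.2
  exact lt_of_le_of_lt this hB1
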